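/- For every u in the Schwartz space 𝒮(ℝⁿ), every t > 0 and every x ∈ ℝⁿ: the map t ↦ σ_t(ξ) is differentiable for each ξ, the map t ↦ S_t u(x) is differentiable, and with A(t,ξ) := −∂/∂t (ln σ_t(ξ)) one has ∂/∂t S_t u(x) = −(2π)^{−n/2} ∫_{ℝⁿ} e^{ix·ξ} A(t,ξ) σ_t(ξ) û(ξ) dξ, i.e. ∂/∂t S_t u + A(t,D) S_t u = 0. -/

import Mathlib

open MeasureTheory Real Filter Topology

/-- The Fourier transform with normalization `(2π)^(-n/2)`. -/
noncomputable def fourierTransform {n : ℕ} (u : EuclideanSpace ℝ (Fin n) → ℂ)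
    (ξ : EuclideanSpace ℝ (Fin n)) : ℂ :=
  (((2 * π) ^ (-(n : ℝ) / 2) : ℝ) : ℂ) *
    ∫ x, Complex.exp (-(Complex.I * ((inner ℝ x ξ : ℝ) : ℂ))) * u x

/-- `p_t(x) = (2π)^{-n} ∫ e^{ix·ξ} e^{-∫₀ᵗ q(τ,ξ)dτ} dξ`. -/
noncomputable def pDens {n : ℕ} (q : ℝ → EuclideanSpace ℝ (Fin n) → ℝ)
    (t : ℝ) (x : EuclideanSpace ℝ (Fin n)) : ℂ :=
  (((2 * π) ^ (-(n : ℝ)) : ℝ) : ℂ) *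
    ∫ ξ, Complex.exp (Complex.I * ((inner ℝ x ξ : ℝ) : ℂ)) *
      ((Real.exp (-(∫ τ in (0:ℝ)..t, q τ ξ)) : ℝ) : ℂ)

/-- `σ_t(ξ) = p_{1/t}(ξ)/p_{1/t}(0)`. -/
noncomputable def sigmaFn {n : ℕ} (q : ℝ → EuclideanSpace ℝ (Fin n) → ℝ)
    (t : ℝ) (ξ : EuclideanSpace ℝ (Fin n)) : ℂ :=
  pDens q (1 / t) ξ / pDens q (1 / t) 0

/-- `A(t,ξ) = -∂/∂t ln σ_t(ξ)`. -/
noncomputable def Asymb {n : ℕ} (q : ℝ → EuclideanSpace ℝ (Fin n) → ℝ)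
    (t : ℝ) (ξ : EuclideanSpace ℝ (Fin n)) : ℂ :=
  -(deriv (fun t' => Complex.log (sigmaFn q t' ξ)) t)

/-- `S_t u(x) = (2π)^{-n/2} ∫ e^{ix·ξ} σ_t(ξ) û(ξ) dξ`. -/
noncomputable def Sop {n : ℕ} (q : ℝ → EuclideanSpace ℝ (Fin n) → ℝ)
    (t : ℝ) (u : EuclideanSpace ℝ (Fin n) → ℂ) (x : EuclideanSpace ℝ (Fin n)) : ℂ :=
  (((2 * π) ^ (-(n : ℝ) / 2) : ℝ) : ℂ) *
    ∫ ξ, Complex.exp (Complex.I * ((inner ℝ x ξ : ℝ) : ℂ)) * sigmaFn q t ξ *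
      fourierTransform u ξ

namespace Stmt7Aux
variable {n : ℕ}

/-- `Q(s,η) = ∫₀ˢ q(τ,η)dτ`. -/
noncomputable def Qa (q : ℝ → EuclideanSpace ℝ (Fin n) → ℝ) (s : ℝ)
    (η : EuclideanSpace ℝ (Fin n)) : ℝ := ∫ τ in (0:ℝ)..s, q τ η

/-- The integral appearing in `pDens`. -/
noncomputable def Ga (q : ℝ → EuclideanSpace ℝ (Fin n) → ℝ) (s : ℝ)
    (y : EuclideanSpace ℝ (Fin n)) : ℂ :=
  ∫ η, Complex.exp (Complex.I * ((inner ℝ y η : ℝ) : ℂ)) * ((Real.exp (-(Qa q s η)) : ℝ) : ℂ)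

/-- The derivative in `s` of the integral appearing in `pDens`. -/
noncomputable def DGa (q : ℝ → EuclideanSpace ℝ (Fin n) → ℝ) (s : ℝ)
    (y : EuclideanSpace ℝ (Fin n)) : ℂ :=
  ∫ η, Complex.exp (Complex.I * ((inner ℝ y η : ℝ) : ℂ)) *
    ((Real.exp (-(Qa q s η)) * (-(q s η)) : ℝ) : ℂ)


/-- Derivative of `pDens` in the time variable. -/
noncomputable def Dp (q : ℝ → EuclideanSpace ℝ (Fin n) → ℝ) (s : ℝ)
    (y : EuclideanSpace ℝ (Fin n)) : ℂ :=
  (((2 * π) ^ (-(n:ℝ)) : ℝ) : ℂ) * DGa q s y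

/-- Derivative of `sigmaFn` in the time variable. -/
noncomputable def sigmaD (q : ℝ → EuclideanSpace ℝ (Fin n) → ℝ) (t : ℝ)
    (ξ : EuclideanSpace ℝ (Fin n)) : ℂ :=
  ((-(1/t^2) : ℝ) • Dp q (1/t) ξ * pDens q (1/t) 0 -
    pDens q (1/t) ξ * ((-(1/t^2) : ℝ) • Dp q (1/t) 0)) / pDens q (1/t) 0 ^ 2

variable {q : ℝ → EuclideanSpace ℝ (Fin n) → ℝ}
  {ψ : EuclideanSpace ℝ (Fin n) → ℝ} {κ₀ κ₁ : ℝ}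

lemma pDens_eq (s : ℝ) (y : EuclideanSpace ℝ (Fin n)) :
    pDens q s y = (((2 * π) ^ (-(n:ℝ)) : ℝ) : ℂ) * Ga q s y := rfl

lemma norm_helper (r : ℝ) (z : ℂ) : ‖Complex.exp (Complex.I * (r:ℂ)) * z‖ = ‖z‖ := by
  rw [norm_mul]
  simp [Complex.norm_exp]

lemma cont_inner_exp (η : EuclideanSpace ℝ (Fin n)) :
    Continuous fun y : EuclideanSpace ℝ (Fin n) =>
      Complex.exp (Complex.I * ((inner ℝ y η : ℝ) : ℂ)) :=
  Complex.continuous_exp.comp (continuous_const.mul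
    (Complex.continuous_ofReal.comp (continuous_id.inner continuous_const)))

lemma cont_exp_inner (y : EuclideanSpace ℝ (Fin n)) :
    Continuous fun η : EuclideanSpace ℝ (Fin n) =>
      Complex.exp (Complex.I * ((inner ℝ y η : ℝ) : ℂ)) :=
  Complex.continuous_exp.comp (continuous_const.mul
    (Complex.continuous_ofReal.comp (continuous_const.inner continuous_id)))

lemma q_cont1 (hq_cont : Continuous (fun p : ℝ × EuclideanSpace ℝ (Fin n) => q p.1 p.2))
    (η : EuclideanSpace ℝ (Fin n)) : Continuous fun τ => q τ η :=
  hq_cont.comp ((continuous_id.prodMk continuous_const :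
    Continuous fun τ : ℝ => (τ, η)))

lemma q_cont2 (hq_cont : Continuous (fun p : ℝ × EuclideanSpace ℝ (Fin n) => q p.1 p.2))
    (s : ℝ) : Continuous fun η => q s η :=
  hq_cont.comp ((continuous_const.prodMk continuous_id :
    Continuous fun η : EuclideanSpace ℝ (Fin n) => (s, η)))

lemma Qa_hasDerivAt (hq_cont : Continuous (fun p : ℝ × EuclideanSpace ℝ (Fin n) => q p.1 p.2))
    (η : EuclideanSpace ℝ (Fin n)) (s : ℝ) :
    HasDerivAt (fun s' => Qa q s' η) (q s η) s :=
  intervalIntegral.integral_hasDerivAt_right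
    ((q_cont1 hq_cont η).intervalIntegrable _ _)
    ((q_cont1 hq_cont η).stronglyMeasurableAtFilter _ _)
    (q_cont1 hq_cont η).continuousAt

lemma Qa_continuous (hq_cont : Continuous (fun p : ℝ × EuclideanSpace ℝ (Fin n) => q p.1 p.2))
    (s : ℝ) : Continuous fun η => Qa q s η := by
  exact intervalIntegral.continuous_parametric_intervalIntegral_of_continuous
    (by exact hq_cont.comp continuous_swap) continuous_const

lemma psi_nonneg (hn : 1 ≤ n) (hψ_cont : Continuous ψ)
    (hψ_pos : ∀ ξ, ξ ≠ 0 → 0 < ψ ξ) (ξ : EuclideanSpace ℝ (Fin n)) : 0 ≤ ψ ξ := by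
  rcases eq_or_ne ξ 0 with rfl | hξ
  · have hnt : Nontrivial (EuclideanSpace ℝ (Fin n)) := by
      refine ⟨EuclideanSpace.single ⟨0, hn⟩ 1, 0, fun h => ?_⟩
      have := congrArg (fun v => v ⟨0, hn⟩) h
      simp [EuclideanSpace.single_apply] at this
    haveI := hnt
    haveI : NeBot (𝓝[≠] (0 : EuclideanSpace ℝ (Fin n))) :=
      Module.punctured_nhds_neBot ℝ _ 0
    have htend : Tendsto ψ (𝓝[≠] (0 : EuclideanSpace ℝ (Fin n))) (𝓝 (ψ 0)) :=
      (hψ_cont.tendsto 0).mono_left nhdsWithin_le_nhds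
    exact ge_of_tendsto htend
      (eventually_nhdsWithin_of_forall (fun ξ hξ => (hψ_pos ξ hξ).le))
  · exact (hψ_pos ξ hξ).le

lemma Qa_lb (hq_cont : Continuous (fun p : ℝ × EuclideanSpace ℝ (Fin n) => q p.1 p.2))
    (hq_bound : ∀ τ, 0 ≤ τ → ∀ ξ, κ₀ * ψ ξ ≤ q τ ξ ∧ q τ ξ ≤ κ₁ * ψ ξ)
    {s : ℝ} (hs : 0 < s) (η : EuclideanSpace ℝ (Fin n)) :
    κ₀ * (s * ψ η) ≤ Qa q s η := by
  have h1 : ∫ τ in (0:ℝ)..s, κ₀ * ψ η ≤ ∫ τ in (0:ℝ)..s, q τ η :=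
    intervalIntegral.integral_mono_on hs.le intervalIntegrable_const
      ((q_cont1 hq_cont η).intervalIntegrable _ _)
      (fun τ hτ => (hq_bound τ hτ.1 η).1)
  rw [intervalIntegral.integral_const, smul_eq_mul, sub_zero] at h1
  unfold Qa; linarith [h1]

lemma Qa_ub (hq_cont : Continuous (fun p : ℝ × EuclideanSpace ℝ (Fin n) => q p.1 p.2))
    (hq_bound : ∀ τ, 0 ≤ τ → ∀ ξ, κ₀ * ψ ξ ≤ q τ ξ ∧ q τ ξ ≤ κ₁ * ψ ξ)
    {s : ℝ} (hs : 0 < s) (η : EuclideanSpace ℝ (Fin n)) :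
    Qa q s η ≤ κ₁ * (s * ψ η) := by
  have h1 : ∫ τ in (0:ℝ)..s, q τ η ≤ ∫ τ in (0:ℝ)..s, κ₁ * ψ η :=
    intervalIntegral.integral_mono_on hs.le
      ((q_cont1 hq_cont η).intervalIntegrable _ _) intervalIntegrable_const
      (fun τ hτ => (hq_bound τ hτ.1 η).2)
  rw [intervalIntegral.integral_const, smul_eq_mul, sub_zero] at h1
  unfold Qa; linarith [h1]

lemma integrable_psi_exp (hψ_cont : Continuous ψ)
    (hψ0 : ∀ ξ : EuclideanSpace ℝ (Fin n), 0 ≤ ψ ξ)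
    (hψ_int : ∀ c : ℝ, 0 < c → Integrable (fun ξ : EuclideanSpace ℝ (Fin n) =>
      Real.exp (-(c * ψ ξ))))
    {c : ℝ} (hc : 0 < c) :
    Integrable (fun η : EuclideanSpace ℝ (Fin n) => ψ η * Real.exp (-(c * ψ η))) := by
  have hbig : Integrable (fun η : EuclideanSpace ℝ (Fin n) =>
      (2/c) * Real.exp (-(c/2 * ψ η))) := (hψ_int (c/2) (by positivity)).const_mul _
  refine hbig.mono ?_ ?_
  · exact (hψ_cont.mul ((continuous_const.mul hψ_cont).neg.rexp)).aestronglyMeasurable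
  · refine Eventually.of_forall (fun η => ?_)
    have h0 := hψ0 η
    rw [Real.norm_eq_abs, Real.norm_eq_abs, abs_of_nonneg (by positivity),
      abs_of_nonneg (by positivity)]
    have h1 : ψ η ≤ (2/c) * Real.exp (c/2 * ψ η) := by
      have h2 : c/2 * ψ η ≤ Real.exp (c/2 * ψ η) := by
        linarith [Real.add_one_le_exp (c/2 * ψ η)]
      have h3 := mul_le_mul_of_nonneg_left h2 (by positivity : (0:ℝ) ≤ 2/c)
      calc ψ η = (2/c) * (c/2 * ψ η) := by field_simp
        _ ≤ _ := h3
    calc ψ η * Real.exp (-(c * ψ η))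
        ≤ (2/c) * Real.exp (c/2 * ψ η) * Real.exp (-(c * ψ η)) :=
          mul_le_mul_of_nonneg_right h1 (Real.exp_pos _).le
      _ = (2/c) * Real.exp (-(c/2 * ψ η)) := by
          rw [mul_assoc, ← Real.exp_add]; ring_nf

lemma pDens_zero_eq {s : ℝ} :
    pDens q s 0 = (((2 * π) ^ (-(n:ℝ)) * ∫ η, Real.exp (-(Qa q s η)) : ℝ) : ℂ) := by
  rw [pDens_eq]
  have h : Ga q s 0 = ((∫ η, Real.exp (-(Qa q s η)) : ℝ) : ℂ) := by
    unfold Ga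
    simp only [inner_zero_left, Complex.ofReal_zero, mul_zero, Complex.exp_zero, one_mul]
    exact integral_ofReal
  rw [h, Complex.ofReal_mul]

section Main

variable (hq_cont : Continuous (fun p : ℝ × EuclideanSpace ℝ (Fin n) => q p.1 p.2))
  (hq_bound : ∀ τ, 0 ≤ τ → ∀ ξ, κ₀ * ψ ξ ≤ q τ ξ ∧ q τ ξ ≤ κ₁ * ψ ξ)
  (hψ_cont : Continuous ψ)
  (hψ0 : ∀ ξ : EuclideanSpace ℝ (Fin n), 0 ≤ ψ ξ)
  (hψ_int : ∀ c : ℝ, 0 < c → Integrable (fun ξ : EuclideanSpace ℝ (Fin n) =>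
    Real.exp (-(c * ψ ξ))))
  (hκ₀ : 0 < κ₀) (hκ₁ : 0 < κ₁)

include hq_cont hq_bound hψ_cont hψ0 hψ_int hκ₀ hκ₁

lemma exp_negQ_le {s : ℝ} (hs : 0 < s) (η : EuclideanSpace ℝ (Fin n)) :
    Real.exp (-(Qa q s η)) ≤ Real.exp (-(κ₀ * s * ψ η)) := by
  apply Real.exp_le_exp.2
  have h1 := Qa_lb hq_cont hq_bound hs η
  have h2 := mul_assoc κ₀ s (ψ η)
  linarith

lemma exp_negQ_le' {a s : ℝ} (ha : 0 < a) (has : a ≤ s)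
    (η : EuclideanSpace ℝ (Fin n)) :
    Real.exp (-(Qa q s η)) ≤ Real.exp (-(κ₀ * a * ψ η)) := by
  apply Real.exp_le_exp.2
  have h1 := Qa_lb hq_cont hq_bound (ha.trans_le has) η
  have h2 : κ₀ * a * ψ η ≤ κ₀ * s * ψ η :=
    mul_le_mul_of_nonneg_right (mul_le_mul_of_nonneg_left has hκ₀.le) (hψ0 η)
  have h3 := mul_assoc κ₀ s (ψ η)
  linarith

lemma q_nonneg {s : ℝ} (hs : 0 < s) (η : EuclideanSpace ℝ (Fin n)) : 0 ≤ q s η :=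
  le_trans (mul_nonneg hκ₀.le (hψ0 η)) (hq_bound s hs.le η).1

lemma DG_integrand_norm_le {a s : ℝ} (ha : 0 < a) (has : a ≤ s)
    (y η : EuclideanSpace ℝ (Fin n)) :
    ‖Complex.exp (Complex.I * ((inner ℝ y η : ℝ) : ℂ)) *
      ((Real.exp (-(Qa q s η)) * (-(q s η)) : ℝ) : ℂ)‖
      ≤ κ₁ * (ψ η * Real.exp (-(κ₀ * a * ψ η))) := by
  have hs : 0 < s := ha.trans_le has
  have hq0 := q_nonneg hq_cont hq_bound hψ_cont hψ0 hψ_int hκ₀ hκ₁ hs η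
  have hqub : q s η ≤ κ₁ * ψ η := (hq_bound s hs.le η).2
  have hElb := exp_negQ_le' hq_cont hq_bound hψ_cont hψ0 hψ_int hκ₀ hκ₁ ha has η
  rw [norm_helper, Complex.norm_real, Real.norm_eq_abs, abs_mul, abs_neg,
    abs_of_nonneg (Real.exp_pos _).le, abs_of_nonneg hq0]
  calc Real.exp (-(Qa q s η)) * q s η
      ≤ Real.exp (-(κ₀ * a * ψ η)) * (κ₁ * ψ η) :=
        mul_le_mul hElb hqub hq0 (Real.exp_pos _).le
    _ = κ₁ * (ψ η * Real.exp (-(κ₀ * a * ψ η))) := by ring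

lemma integrable_G_integrand {s : ℝ} (hs : 0 < s) (y : EuclideanSpace ℝ (Fin n)) :
    Integrable (fun η => Complex.exp (Complex.I * ((inner ℝ y η : ℝ) : ℂ)) *
      ((Real.exp (-(Qa q s η)) : ℝ) : ℂ)) := by
  refine ((hψ_int (κ₀ * s) (by positivity)).mono ?_ ?_)
  · exact ((cont_exp_inner y).mul
      (Complex.continuous_ofReal.comp ((Qa_continuous hq_cont s).neg.rexp))).aestronglyMeasurable
  · refine Eventually.of_forall (fun η => ?_)
    rw [norm_helper, Complex.norm_real, Real.norm_eq_abs, Real.norm_eq_abs,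
      abs_of_nonneg (Real.exp_pos _).le, abs_of_nonneg (Real.exp_pos _).le]
    exact exp_negQ_le hq_cont hq_bound hψ_cont hψ0 hψ_int hκ₀ hκ₁ hs η

lemma integrable_exp_negQ {s : ℝ} (hs : 0 < s) :
    Integrable (fun η => Real.exp (-(Qa q s η))) := by
  refine ((hψ_int (κ₀ * s) (by positivity)).mono ?_ ?_)
  · exact ((Qa_continuous hq_cont s).neg.rexp).aestronglyMeasurable
  · refine Eventually.of_forall (fun η => ?_)
    rw [Real.norm_eq_abs, Real.norm_eq_abs,
      abs_of_nonneg (Real.exp_pos _).le, abs_of_nonneg (Real.exp_pos _).le]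
    exact exp_negQ_le hq_cont hq_bound hψ_cont hψ0 hψ_int hκ₀ hκ₁ hs η

lemma integrable_DG_integrand {s : ℝ} (hs : 0 < s) (y : EuclideanSpace ℝ (Fin n)) :
    Integrable (fun η => Complex.exp (Complex.I * ((inner ℝ y η : ℝ) : ℂ)) *
      ((Real.exp (-(Qa q s η)) * (-(q s η)) : ℝ) : ℂ)) := by
  have hbig : Integrable (fun η : EuclideanSpace ℝ (Fin n) =>
      κ₁ * (ψ η * Real.exp (-(κ₀ * s * ψ η)))) :=
    ((integrable_psi_exp hψ_cont hψ0 hψ_int (by positivity)).const_mul κ₁)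
  refine hbig.mono ?_ ?_
  · exact ((cont_exp_inner y).mul (Complex.continuous_ofReal.comp
      (((Qa_continuous hq_cont s).neg.rexp).mul
        (q_cont2 hq_cont s).neg))).aestronglyMeasurable
  · refine Eventually.of_forall (fun η => ?_)
    rw [Real.norm_eq_abs, abs_of_nonneg
      (mul_nonneg hκ₁.le (mul_nonneg (hψ0 η) (Real.exp_pos _).le))]
    exact DG_integrand_norm_le hq_cont hq_bound hψ_cont hψ0 hψ_int hκ₀ hκ₁ hs le_rfl y η

lemma norm_Ga_le {a s : ℝ} (ha : 0 < a) (has : a ≤ s) (y : EuclideanSpace ℝ (Fin n)) :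
    ‖Ga q s y‖ ≤ ∫ η, Real.exp (-(κ₀ * a * ψ η)) := by
  refine norm_integral_le_of_norm_le (hψ_int (κ₀ * a) (by positivity)) ?_
  refine Eventually.of_forall (fun η => ?_)
  rw [norm_helper, Complex.norm_real, Real.norm_eq_abs, abs_of_nonneg (Real.exp_pos _).le]
  exact exp_negQ_le' hq_cont hq_bound hψ_cont hψ0 hψ_int hκ₀ hκ₁ ha has η

lemma norm_DGa_le {a s : ℝ} (ha : 0 < a) (has : a ≤ s) (y : EuclideanSpace ℝ (Fin n)) :
    ‖DGa q s y‖ ≤ κ₁ * ∫ η, ψ η * Real.exp (-(κ₀ * a * ψ η)) := by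
  have hint := integrable_psi_exp hψ_cont hψ0 hψ_int
    (show (0:ℝ) < κ₀ * a by positivity)
  rw [← integral_const_mul]
  refine norm_integral_le_of_norm_le (hint.const_mul κ₁) ?_
  exact Eventually.of_forall
    (fun η => DG_integrand_norm_le hq_cont hq_bound hψ_cont hψ0 hψ_int hκ₀ hκ₁ ha has y η)

lemma exp_negQ_integral_lb {s b : ℝ} (hs : 0 < s) (hsb : s ≤ b) :
    ∫ η, Real.exp (-(κ₁ * b * ψ η)) ≤ ∫ η, Real.exp (-(Qa q s η)) := by
  have hb : 0 < b := hs.trans_le hsb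
  refine integral_mono (hψ_int (κ₁ * b) (by positivity))
    (integrable_exp_negQ hq_cont hq_bound hψ_cont hψ0 hψ_int hκ₀ hκ₁ hs) (fun η => ?_)
  apply Real.exp_le_exp.2
  have h1 := Qa_ub hq_cont hq_bound hs η
  have h2 : κ₁ * s * ψ η ≤ κ₁ * b * ψ η :=
    mul_le_mul_of_nonneg_right (mul_le_mul_of_nonneg_left hsb hκ₁.le) (hψ0 η)
  have h3 := mul_assoc κ₁ s (ψ η)
  linarith

lemma hasDerivAt_Ga {s₀ : ℝ} (hs₀ : 0 < s₀) (y : EuclideanSpace ℝ (Fin n)) :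
    HasDerivAt (fun s => Ga q s y) (DGa q s₀ y) s₀ := by
  have hball : ∀ s ∈ Metric.ball s₀ (s₀/2), s₀/2 < s ∧ s < 3*s₀/2 := by
    intro s hs
    rw [Metric.mem_ball, Real.dist_eq, abs_sub_lt_iff] at hs
    constructor <;> linarith [hs.1, hs.2]
  have hmain := hasDerivAt_integral_of_dominated_loc_of_deriv_le
    (μ := (volume : Measure (EuclideanSpace ℝ (Fin n)))) (x₀ := s₀)
    (F := fun s η => Complex.exp (Complex.I * ((inner ℝ y η : ℝ) : ℂ)) *
      ((Real.exp (-(Qa q s η)) : ℝ) : ℂ))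
    (F' := fun s η => Complex.exp (Complex.I * ((inner ℝ y η : ℝ) : ℂ)) *
      ((Real.exp (-(Qa q s η)) * (-(q s η)) : ℝ) : ℂ))
    (bound := fun η => κ₁ * (ψ η * Real.exp (-(κ₀ * (s₀/2) * ψ η))))
    (Metric.ball_mem_nhds s₀ (show (0:ℝ) < s₀/2 by positivity))
    ?_ ?_ ?_ ?_ ?_ ?_
  · exact hmain.2
  · refine Eventually.of_forall (fun s => ?_)
    exact ((cont_exp_inner y).mul (Complex.continuous_ofReal.comp
      ((Qa_continuous hq_cont s).neg.rexp))).aestronglyMeasurable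
  · exact integrable_G_integrand hq_cont hq_bound hψ_cont hψ0 hψ_int hκ₀ hκ₁ hs₀ y
  · exact ((cont_exp_inner y).mul (Complex.continuous_ofReal.comp
      (((Qa_continuous hq_cont s₀).neg.rexp).mul
        (q_cont2 hq_cont s₀).neg))).aestronglyMeasurable
  · refine Eventually.of_forall (fun η => fun s hs => ?_)
    have hs2 := hball s hs
    exact DG_integrand_norm_le hq_cont hq_bound hψ_cont hψ0 hψ_int hκ₀ hκ₁
      (by positivity) hs2.1.le y η
  · exact (integrable_psi_exp hψ_cont hψ0 hψ_int
      (show (0:ℝ) < κ₀ * (s₀/2) by positivity)).const_mul κ₁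
  · refine Eventually.of_forall (fun η => fun s _ => ?_)
    have h1 : HasDerivAt (fun s' => Qa q s' η) (q s η) s := Qa_hasDerivAt hq_cont η s
    have h2 : HasDerivAt (fun s' => Real.exp (-(Qa q s' η)))
        (Real.exp (-(Qa q s η)) * (-(q s η))) s := h1.neg.exp
    have h3 := h2.ofReal_comp
    exact HasDerivAt.const_mul _ h3

lemma continuous_Ga {s : ℝ} (hs : 0 < s) : Continuous fun y => Ga q s y := by
  apply continuous_of_dominated
    (bound := fun η => Real.exp (-(κ₀ * s * ψ η)))
  · intro y
    exact ((cont_exp_inner y).mul (Complex.continuous_ofReal.comp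
      ((Qa_continuous hq_cont s).neg.rexp))).aestronglyMeasurable
  · intro y
    refine Eventually.of_forall (fun η => ?_)
    rw [norm_helper, Complex.norm_real, Real.norm_eq_abs, abs_of_nonneg (Real.exp_pos _).le]
    exact exp_negQ_le hq_cont hq_bound hψ_cont hψ0 hψ_int hκ₀ hκ₁ hs η
  · exact hψ_int (κ₀ * s) (by positivity)
  · exact Eventually.of_forall (fun η => (cont_inner_exp η).mul continuous_const)

lemma continuous_DGa {s : ℝ} (hs : 0 < s) : Continuous fun y => DGa q s y := by
  apply continuous_of_dominated
    (bound := fun η => κ₁ * (ψ η * Real.exp (-(κ₀ * s * ψ η))))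
  · intro y
    exact ((cont_exp_inner y).mul (Complex.continuous_ofReal.comp
      (((Qa_continuous hq_cont s).neg.rexp).mul
        (q_cont2 hq_cont s).neg))).aestronglyMeasurable
  · intro y
    exact Eventually.of_forall
      (fun η => DG_integrand_norm_le hq_cont hq_bound hψ_cont hψ0 hψ_int hκ₀ hκ₁ hs le_rfl y η)
  · exact (integrable_psi_exp hψ_cont hψ0 hψ_int
      (show (0:ℝ) < κ₀ * s by positivity)).const_mul κ₁
  · exact Eventually.of_forall (fun η => (cont_inner_exp η).mul continuous_const)


lemma J_pos {c : ℝ} (hc : 0 < c) : 0 < ∫ η, Real.exp (-(c * ψ η)) := by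
  rw [integral_pos_iff_support_of_nonneg_ae
    (Eventually.of_forall (fun η => (Real.exp_pos _).le)) (hψ_int c hc)]
  have hsup : Function.support (fun η : EuclideanSpace ℝ (Fin n) =>
      Real.exp (-(c * ψ η))) = Set.univ :=
    Set.eq_univ_of_forall (fun η => (Real.exp_pos _).ne')
  rw [hsup]
  exact isOpen_univ.measure_pos volume Set.univ_nonempty

lemma pDens_norm_le {a s : ℝ} (ha : 0 < a) (has : a ≤ s) (y : EuclideanSpace ℝ (Fin n)) :
    ‖pDens q s y‖ ≤ (2 * π) ^ (-(n:ℝ)) * ∫ η, Real.exp (-(κ₀ * a * ψ η)) := by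
  rw [pDens_eq, norm_mul, Complex.norm_real, Real.norm_eq_abs,
    abs_of_nonneg (Real.rpow_nonneg (by positivity) _)]
  exact mul_le_mul_of_nonneg_left
    (norm_Ga_le hq_cont hq_bound hψ_cont hψ0 hψ_int hκ₀ hκ₁ ha has y)
    (Real.rpow_nonneg (by positivity) _)

lemma Dp_norm_le {a s : ℝ} (ha : 0 < a) (has : a ≤ s) (y : EuclideanSpace ℝ (Fin n)) :
    ‖Dp q s y‖ ≤ (2 * π) ^ (-(n:ℝ)) * (κ₁ * ∫ η, ψ η * Real.exp (-(κ₀ * a * ψ η))) := by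
  rw [Dp, norm_mul, Complex.norm_real, Real.norm_eq_abs,
    abs_of_nonneg (Real.rpow_nonneg (by positivity) _)]
  exact mul_le_mul_of_nonneg_left
    (norm_DGa_le hq_cont hq_bound hψ_cont hψ0 hψ_int hκ₀ hκ₁ ha has y)
    (Real.rpow_nonneg (by positivity) _)

lemma pDens_re_lb {s b : ℝ} (hs : 0 < s) (hsb : s ≤ b) :
    (2 * π) ^ (-(n:ℝ)) * ∫ η, Real.exp (-(κ₁ * b * ψ η)) ≤ (pDens q s 0).re := by
  rw [pDens_zero_eq, Complex.ofReal_re]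
  exact mul_le_mul_of_nonneg_left
    (exp_negQ_integral_lb hq_cont hq_bound hψ_cont hψ0 hψ_int hκ₀ hκ₁ hs hsb)
    (Real.rpow_nonneg (by positivity) _)

lemma pDens_norm_lb {s b : ℝ} (hs : 0 < s) (hsb : s ≤ b) :
    (2 * π) ^ (-(n:ℝ)) * ∫ η, Real.exp (-(κ₁ * b * ψ η)) ≤ ‖pDens q s 0‖ :=
  le_trans (pDens_re_lb hq_cont hq_bound hψ_cont hψ0 hψ_int hκ₀ hκ₁ hs hsb)
    (le_trans (Complex.re_le_norm _) (le_of_eq rfl))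

lemma hasDerivAt_pDens {s₀ : ℝ} (hs₀ : 0 < s₀) (y : EuclideanSpace ℝ (Fin n)) :
    HasDerivAt (fun s => pDens q s y) (Dp q s₀ y) s₀ :=
  HasDerivAt.const_mul _ (hasDerivAt_Ga hq_cont hq_bound hψ_cont hψ0 hψ_int hκ₀ hκ₁ hs₀ y)

lemma hasDerivAt_pDens_inv {t' : ℝ} (ht' : 0 < t') (y : EuclideanSpace ℝ (Fin n)) :
    HasDerivAt (fun s => pDens q (1/s) y) ((-(1/t'^2) : ℝ) • Dp q (1/t') y) t' := by
  have hinv : HasDerivAt (fun s : ℝ => 1/s) (-(1/t'^2)) t' := by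
    simpa [one_div] using hasDerivAt_inv ht'.ne'
  exact (hasDerivAt_pDens hq_cont hq_bound hψ_cont hψ0 hψ_int hκ₀ hκ₁
    (by positivity : (0:ℝ) < 1/t') y).scomp t' hinv

lemma hasDerivAt_sigma
    (hp_pos : ∀ t : ℝ, 0 < t → ∀ ξ, 0 < (pDens q t ξ).re ∧ (pDens q t ξ).im = 0)
    {t' : ℝ} (ht' : 0 < t') (ξ : EuclideanSpace ℝ (Fin n)) :
    HasDerivAt (fun s => sigmaFn q s ξ) (sigmaD q t' ξ) t' := by
  have hs : (0:ℝ) < 1/t' := by positivity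
  have hne : pDens q (1/t') 0 ≠ 0 := by
    have h := (hp_pos (1/t') hs 0).1
    intro hzero; rw [hzero] at h; simp at h
  have hξ := hasDerivAt_pDens_inv hq_cont hq_bound hψ_cont hψ0 hψ_int hκ₀ hκ₁ ht' ξ
  have h0 := hasDerivAt_pDens_inv hq_cont hq_bound hψ_cont hψ0 hψ_int hκ₀ hκ₁ ht' 0
  exact hξ.div h0 hne

lemma continuous_pDens_y {s : ℝ} (hs : 0 < s) :
    Continuous fun y => pDens q s y :=
  continuous_const.mul (continuous_Ga hq_cont hq_bound hψ_cont hψ0 hψ_int hκ₀ hκ₁ hs)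

lemma continuous_Dp_y {s : ℝ} (hs : 0 < s) :
    Continuous fun y => Dp q s y :=
  continuous_const.mul (continuous_DGa hq_cont hq_bound hψ_cont hψ0 hψ_int hκ₀ hκ₁ hs)

lemma continuous_sigma_y {t' : ℝ} (ht' : 0 < t') :
    Continuous fun ξ => sigmaFn q t' ξ := by
  have hs : (0:ℝ) < 1/t' := by positivity
  exact ((continuous_pDens_y hq_cont hq_bound hψ_cont hψ0 hψ_int hκ₀ hκ₁ hs).div_const _)

lemma continuous_sigmaD_y {t' : ℝ} (ht' : 0 < t') :
    Continuous fun ξ => sigmaD q t' ξ := by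
  have hs : (0:ℝ) < 1/t' := by positivity
  have h1 := continuous_pDens_y hq_cont hq_bound hψ_cont hψ0 hψ_int hκ₀ hκ₁ hs
  have h2 := continuous_Dp_y hq_cont hq_bound hψ_cont hψ0 hψ_int hκ₀ hκ₁ hs
  unfold sigmaD
  have h3 := ((h2.const_smul (-(1/t'^2) : ℝ)).mul (continuous_const (y := pDens q (1/t') 0)))
  have h4 := h1.mul (continuous_const (y := ((-(1/t'^2) : ℝ) • Dp q (1/t') 0)))
  exact (h3.sub h4).div_const _

lemma sigmaD_norm_le {t t' : ℝ} (ht : 0 < t) (hball : t' ∈ Metric.ball t (t/2))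
    (ξ : EuclideanSpace ℝ (Fin n)) :
    ‖sigmaD q t' ξ‖ ≤
      ((4/t^2 * ((2 * π) ^ (-(n:ℝ)) * (κ₁ * ∫ η, ψ η * Real.exp (-(κ₀ * (1/(2*t)) * ψ η))))) *
        ((2 * π) ^ (-(n:ℝ)) * ∫ η, Real.exp (-(κ₀ * (1/(2*t)) * ψ η))) +
       ((2 * π) ^ (-(n:ℝ)) * ∫ η, Real.exp (-(κ₀ * (1/(2*t)) * ψ η))) *
        (4/t^2 * ((2 * π) ^ (-(n:ℝ)) * (κ₁ * ∫ η, ψ η * Real.exp (-(κ₀ * (1/(2*t)) * ψ η)))))) /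
      ((2 * π) ^ (-(n:ℝ)) * ∫ η, Real.exp (-(κ₁ * (2/t) * ψ η)))^2 := by
  rw [Metric.mem_ball, Real.dist_eq, abs_sub_lt_iff] at hball
  have ht1 : t/2 < t' := by linarith [hball.2]
  have ht2 : t' < 3*t/2 := by linarith [hball.1]
  have ht'0 : 0 < t' := lt_trans (by positivity) ht1
  have ha : (1:ℝ)/(2*t) ≤ 1/t' := by
    rw [div_le_div_iff₀ (by positivity) ht'0]; nlinarith
  have hsb : 1/t' ≤ 2/t := by
    rw [div_le_div_iff₀ ht'0 ht]; nlinarith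
  have hs : (0:ℝ) < 1/t' := by positivity
  have ha0 : (0:ℝ) < 1/(2*t) := by positivity
  have hP : ‖pDens q (1/t') ξ‖ ≤
      (2 * π) ^ (-(n:ℝ)) * ∫ η, Real.exp (-(κ₀ * (1/(2*t)) * ψ η)) :=
    pDens_norm_le hq_cont hq_bound hψ_cont hψ0 hψ_int hκ₀ hκ₁ ha0 ha ξ
  have hP0 : ‖pDens q (1/t') 0‖ ≤
      (2 * π) ^ (-(n:ℝ)) * ∫ η, Real.exp (-(κ₀ * (1/(2*t)) * ψ η)) :=
    pDens_norm_le hq_cont hq_bound hψ_cont hψ0 hψ_int hκ₀ hκ₁ ha0 ha 0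
  have hD : ‖Dp q (1/t') ξ‖ ≤
      (2 * π) ^ (-(n:ℝ)) * (κ₁ * ∫ η, ψ η * Real.exp (-(κ₀ * (1/(2*t)) * ψ η))) :=
    Dp_norm_le hq_cont hq_bound hψ_cont hψ0 hψ_int hκ₀ hκ₁ ha0 ha ξ
  have hD0 : ‖Dp q (1/t') 0‖ ≤
      (2 * π) ^ (-(n:ℝ)) * (κ₁ * ∫ η, ψ η * Real.exp (-(κ₀ * (1/(2*t)) * ψ η))) :=
    Dp_norm_le hq_cont hq_bound hψ_cont hψ0 hψ_int hκ₀ hκ₁ ha0 ha 0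
  have hmle : (2 * π) ^ (-(n:ℝ)) * ∫ η, Real.exp (-(κ₁ * (2/t) * ψ η)) ≤
      ‖pDens q (1/t') 0‖ :=
    pDens_norm_lb hq_cont hq_bound hψ_cont hψ0 hψ_int hκ₀ hκ₁ hs hsb
  have hmpos : (0:ℝ) < (2 * π) ^ (-(n:ℝ)) * ∫ η, Real.exp (-(κ₁ * (2/t) * ψ η)) :=
    mul_pos (Real.rpow_pos_of_pos (by positivity) _)
      (J_pos hq_cont hq_bound hψ_cont hψ0 hψ_int hκ₀ hκ₁
        (mul_pos hκ₁ (by positivity)))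
  have hsc : ‖(-(1/t'^2) : ℝ)‖ ≤ 4/t^2 := by
    rw [Real.norm_eq_abs, abs_neg, abs_of_nonneg (by positivity)]
    rw [div_le_div_iff₀ (by positivity) (by positivity)]
    nlinarith
  have hB1n : (0:ℝ) ≤ (2 * π) ^ (-(n:ℝ)) * ∫ η, Real.exp (-(κ₀ * (1/(2*t)) * ψ η)) :=
    le_trans (norm_nonneg _) hP
  have hB2n : (0:ℝ) ≤ (2 * π) ^ (-(n:ℝ)) *
      (κ₁ * ∫ η, ψ η * Real.exp (-(κ₀ * (1/(2*t)) * ψ η))) :=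
    le_trans (norm_nonneg _) hD
  have h4t : (0:ℝ) ≤ 4/t^2 := by positivity
  unfold sigmaD
  rw [norm_div, norm_pow]
  refine div_le_div₀
    (add_nonneg (mul_nonneg (mul_nonneg h4t hB2n) hB1n)
      (mul_nonneg hB1n (mul_nonneg h4t hB2n)))
    ?_ (pow_pos hmpos 2) (pow_le_pow_left₀ hmpos.le hmle 2)
  refine le_trans (norm_sub_le _ _) (add_le_add ?_ ?_)
  · rw [norm_mul, norm_smul]
    exact mul_le_mul (mul_le_mul hsc hD (norm_nonneg _) h4t) hP0 (norm_nonneg _)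
      (mul_nonneg h4t hB2n)
  · rw [norm_mul, norm_smul]
    exact mul_le_mul hP (mul_le_mul hsc hD0 (norm_nonneg _) h4t)
      (mul_nonneg (norm_nonneg _) (norm_nonneg _)) hB1n

lemma sigma_norm_le {t : ℝ} (ht : 0 < t) (ξ : EuclideanSpace ℝ (Fin n)) :
    ‖sigmaFn q t ξ‖ ≤
      ((2 * π) ^ (-(n:ℝ)) * ∫ η, Real.exp (-(κ₀ * (1/(2*t)) * ψ η))) /
      ((2 * π) ^ (-(n:ℝ)) * ∫ η, Real.exp (-(κ₁ * (2/t) * ψ η))) := by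
  have hs : (0:ℝ) < 1/t := by positivity
  have ha0 : (0:ℝ) < 1/(2*t) := by positivity
  have ha : (1:ℝ)/(2*t) ≤ 1/t := by
    rw [div_le_div_iff₀ (by positivity) ht]; nlinarith
  have hsb : 1/t ≤ 2/t := by
    rw [div_le_div_iff₀ ht ht]; nlinarith
  have hP := pDens_norm_le hq_cont hq_bound hψ_cont hψ0 hψ_int hκ₀ hκ₁ ha0 ha ξ
  have hm := pDens_norm_lb hq_cont hq_bound hψ_cont hψ0 hψ_int hκ₀ hκ₁ hs hsb
  have hmpos : (0:ℝ) < (2 * π) ^ (-(n:ℝ)) * ∫ η, Real.exp (-(κ₁ * (2/t) * ψ η)) :=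
    mul_pos (Real.rpow_pos_of_pos (by positivity) _)
      (J_pos hq_cont hq_bound hψ_cont hψ0 hψ_int hκ₀ hκ₁
        (mul_pos hκ₁ (by positivity)))
  show ‖pDens q (1/t) ξ / pDens q (1/t) 0‖ ≤ _
  rw [norm_div]
  exact div_le_div₀ (le_trans (norm_nonneg _) hP) hP hmpos hm

end Main

lemma sigma_re_pos
    (hp_pos : ∀ t : ℝ, 0 < t → ∀ ξ, 0 < (pDens q t ξ).re ∧ (pDens q t ξ).im = 0)
    {t : ℝ} (ht : 0 < t) (ξ : EuclideanSpace ℝ (Fin n)) : 0 < (sigmaFn q t ξ).re := by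
  have hs : (0:ℝ) < 1/t := by positivity
  obtain ⟨h1, h2⟩ := hp_pos (1/t) hs ξ
  obtain ⟨h3, h4⟩ := hp_pos (1/t) hs 0
  have hne : pDens q (1/t) 0 ≠ 0 := by
    intro h; rw [h] at h3; simp at h3
  have key : (sigmaFn q t ξ).re =
      (pDens q (1/t) ξ).re * (pDens q (1/t) 0).re / Complex.normSq (pDens q (1/t) 0) := by
    show ((pDens q (1/t) ξ) / pDens q (1/t) 0).re = _
    rw [Complex.div_re, h2, h4]
    ring
  rw [key]
  exact div_pos (mul_pos h1 h3) (Complex.normSq_pos.2 hne)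

lemma fourier_eq (u : SchwartzMap (EuclideanSpace ℝ (Fin n)) ℂ) :
    (fun ξ => fourierTransform (⇑u) ξ) = fun ξ =>
      (((2 * π) ^ (-(n:ℝ)/2) : ℝ) : ℂ) *
        (SchwartzMap.fourierTransformCLM ℂ u) ((2*π)⁻¹ • ξ) := by
  have hπ : (2*π) ≠ 0 := by positivity
  funext ξ
  unfold fourierTransform
  congr 1
  rw [SchwartzMap.fourierTransformCLM_apply, SchwartzMap.fourier_coe, Real.fourier_eq']
  congr 1
  funext v
  rw [smul_eq_mul]
  congr 1
  have h1 : (inner ℝ v ((2*π)⁻¹ • ξ) : ℝ) = (2*π)⁻¹ * (inner ℝ v ξ : ℝ) :=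
    real_inner_smul_right _ _ _
  rw [h1]
  have h2 : -2 * π * ((2*π)⁻¹ * (inner ℝ v ξ : ℝ)) = -(inner ℝ v ξ : ℝ) := by
    field_simp
  rw [h2]
  push_cast
  ring

lemma fourier_integrable (u : SchwartzMap (EuclideanSpace ℝ (Fin n)) ℂ) :
    Integrable (fun ξ => fourierTransform (⇑u) ξ) := by
  rw [fourier_eq]
  have h2π : ((2*π)⁻¹ : ℝ) ≠ 0 := by positivity
  exact ((SchwartzMap.fourierTransformCLM ℂ u).integrable.comp_smul h2π).const_mul _

lemma fourier_continuous (u : SchwartzMap (EuclideanSpace ℝ (Fin n)) ℂ) :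
    Continuous (fun ξ => fourierTransform (⇑u) ξ) := by
  rw [fourier_eq]
  exact continuous_const.mul
    ((SchwartzMap.fourierTransformCLM ℂ u).continuous.comp (continuous_const_smul _))

end Stmt7Aux


theorem stmt7 {n : ℕ} (hn : 1 ≤ n)
    (ψ : EuclideanSpace ℝ (Fin n) → ℝ) (hψ_cont : Continuous ψ)
    (hψ_pos : ∀ ξ, ξ ≠ 0 → 0 < ψ ξ)
    (C : ℝ) (hC : 0 < C) (hψ_growth : ∀ ξ, ψ ξ ≤ C * (1 + ‖ξ‖ ^ 2))
    (hψ_int : ∀ c : ℝ, 0 < c → Integrable (fun ξ => Real.exp (-(c * ψ ξ))))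
    (q : ℝ → EuclideanSpace ℝ (Fin n) → ℝ)
    (hq_cont : Continuous (fun p : ℝ × EuclideanSpace ℝ (Fin n) => q p.1 p.2))
    (κ₀ κ₁ : ℝ) (hκ₀ : 0 < κ₀) (hκ : κ₀ ≤ κ₁)
    (hq_bound : ∀ τ, 0 ≤ τ → ∀ ξ, κ₀ * ψ ξ ≤ q τ ξ ∧ q τ ξ ≤ κ₁ * ψ ξ)
    (hp_pos : ∀ t : ℝ, 0 < t → ∀ ξ, 0 < (pDens q t ξ).re ∧ (pDens q t ξ).im = 0)
    (u : SchwartzMap (EuclideanSpace ℝ (Fin n)) ℂ)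
    (t : ℝ) (ht : 0 < t) (x : EuclideanSpace ℝ (Fin n)) :
    (∀ ξ, DifferentiableAt ℝ (fun t' => sigmaFn q t' ξ) t) ∧
    DifferentiableAt ℝ (fun t' => Sop q t' (⇑u) x) t ∧
    HasDerivAt (fun t' => Sop q t' (⇑u) x)
      (-((((2 * π) ^ (-(n : ℝ) / 2) : ℝ) : ℂ) *
        ∫ ξ, Complex.exp (Complex.I * ((inner ℝ x ξ : ℝ) : ℂ)) * Asymb q t ξ *
          sigmaFn q t ξ * fourierTransform (⇑u) ξ)) t := by
  have hκ₁ : 0 < κ₁ := lt_of_lt_of_le hκ₀ hκ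
  have hψ0 : ∀ ξ, 0 ≤ ψ ξ := Stmt7Aux.psi_nonneg hn hψ_cont hψ_pos
  have hσ : ∀ t' : ℝ, 0 < t' → ∀ ξ,
      HasDerivAt (fun s => sigmaFn q s ξ) (Stmt7Aux.sigmaD q t' ξ) t' :=
    fun t' ht' ξ => Stmt7Aux.hasDerivAt_sigma hq_cont hq_bound hψ_cont hψ0 hψ_int
      hκ₀ hκ₁ hp_pos ht' ξ
  -- uniform bound for `sigmaD` on a ball around `t`
  obtain ⟨M, hM⟩ : ∃ M : ℝ, ∀ t' ∈ Metric.ball t (t/2), ∀ ξ,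
      ‖Stmt7Aux.sigmaD q t' ξ‖ ≤ M :=
    ⟨_, fun t' hb ξ => Stmt7Aux.sigmaD_norm_le hq_cont hq_bound hψ_cont hψ0 hψ_int
      hκ₀ hκ₁ ht hb ξ⟩
  obtain ⟨K, hK⟩ : ∃ K : ℝ, ∀ ξ, ‖sigmaFn q t ξ‖ ≤ K :=
    ⟨_, fun ξ => Stmt7Aux.sigma_norm_le hq_cont hq_bound hψ_cont hψ0 hψ_int hκ₀ hκ₁ ht ξ⟩
  have hball_pos : ∀ t' ∈ Metric.ball t (t/2), 0 < t' := by
    intro t' hb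
    rw [Metric.mem_ball, Real.dist_eq, abs_sub_lt_iff] at hb
    linarith [hb.2]
  have hu_int := Stmt7Aux.fourier_integrable u
  have hu_cont := Stmt7Aux.fourier_continuous u
  have hmain := hasDerivAt_integral_of_dominated_loc_of_deriv_le
    (μ := (volume : Measure (EuclideanSpace ℝ (Fin n)))) (x₀ := t)
    (F := fun t' ξ => Complex.exp (Complex.I * ((inner ℝ x ξ : ℝ) : ℂ)) * sigmaFn q t' ξ *
      fourierTransform (⇑u) ξ)
    (F' := fun t' ξ => Complex.exp (Complex.I * ((inner ℝ x ξ : ℝ) : ℂ)) *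
      Stmt7Aux.sigmaD q t' ξ * fourierTransform (⇑u) ξ)
    (bound := fun ξ => M * ‖fourierTransform (⇑u) ξ‖)
    (Metric.ball_mem_nhds t (show (0:ℝ) < t/2 by positivity)) ?_ ?_ ?_ ?_ ?_ ?_
  rotate_left
  -- measurability of F t' for t' near t
  · refine Filter.eventually_of_mem
      (Metric.ball_mem_nhds t (show (0:ℝ) < t/2 by positivity)) (fun t' hb => ?_)
    have ht' := hball_pos t' hb
    exact (((Stmt7Aux.cont_exp_inner x).mul
      (Stmt7Aux.continuous_sigma_y hq_cont hq_bound hψ_cont hψ0 hψ_int hκ₀ hκ₁ ht')).mul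
      hu_cont).aestronglyMeasurable
  -- integrability of F t
  · refine ((hu_int.norm.const_mul K).mono ?_ ?_)
    · exact (((Stmt7Aux.cont_exp_inner x).mul
        (Stmt7Aux.continuous_sigma_y hq_cont hq_bound hψ_cont hψ0 hψ_int hκ₀ hκ₁ ht)).mul
        hu_cont).aestronglyMeasurable
    · refine Eventually.of_forall (fun ξ => ?_)
      rw [norm_mul, Stmt7Aux.norm_helper, Real.norm_eq_abs,
        abs_of_nonneg (mul_nonneg (le_trans (norm_nonneg _) (hK 0)) (norm_nonneg _))]
      exact mul_le_mul_of_nonneg_right (hK ξ) (norm_nonneg _)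
  -- measurability of F' t
  · exact (((Stmt7Aux.cont_exp_inner x).mul
      (Stmt7Aux.continuous_sigmaD_y hq_cont hq_bound hψ_cont hψ0 hψ_int hκ₀ hκ₁ ht)).mul
      hu_cont).aestronglyMeasurable
  -- uniform bound
  · refine Eventually.of_forall (fun ξ => fun t' hb => ?_)
    rw [norm_mul, Stmt7Aux.norm_helper]
    exact mul_le_mul_of_nonneg_right (hM t' hb ξ) (norm_nonneg _)
  -- integrability of the bound
  · exact hu_int.norm.const_mul M
  -- differentiability
  · refine Eventually.of_forall (fun ξ => fun t' hb => ?_)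
    exact ((hσ t' (hball_pos t' hb) ξ).const_mul _).mul_const _
  -- now conclude
  have hS : HasDerivAt (fun t' => Sop q t' (⇑u) x)
      ((((2 * π) ^ (-(n:ℝ)/2) : ℝ) : ℂ) *
        ∫ ξ, Complex.exp (Complex.I * ((inner ℝ x ξ : ℝ) : ℂ)) * Stmt7Aux.sigmaD q t ξ *
          fourierTransform (⇑u) ξ) t := HasDerivAt.const_mul _ hmain.2
  have hAσ : ∀ ξ, Asymb q t ξ * sigmaFn q t ξ = -(Stmt7Aux.sigmaD q t ξ) := by
    intro ξ
    have hre : 0 < (sigmaFn q t ξ).re := Stmt7Aux.sigma_re_pos hp_pos ht ξ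
    have hne : sigmaFn q t ξ ≠ 0 := by
      intro h; rw [h] at hre; simp at hre
    have hlog : HasDerivAt (fun t' => Complex.log (sigmaFn q t' ξ))
        (Stmt7Aux.sigmaD q t ξ / sigmaFn q t ξ) t :=
      (hσ t ht ξ).clog_real (Complex.mem_slitPlane_iff.2 (Or.inl hre))
    rw [Asymb, hlog.deriv, neg_mul, div_mul_cancel₀ _ hne]
  have hpt : ∀ ξ, Complex.exp (Complex.I * ((inner ℝ x ξ : ℝ) : ℂ)) * Asymb q t ξ *
      sigmaFn q t ξ * fourierTransform (⇑u) ξ =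
      -(Complex.exp (Complex.I * ((inner ℝ x ξ : ℝ) : ℂ)) * Stmt7Aux.sigmaD q t ξ *
        fourierTransform (⇑u) ξ) := by
    intro ξ
    rw [mul_assoc _ (Asymb q t ξ) (sigmaFn q t ξ), hAσ ξ]
    ring
  have hint_eq : (∫ ξ, Complex.exp (Complex.I * ((inner ℝ x ξ : ℝ) : ℂ)) * Asymb q t ξ *
      sigmaFn q t ξ * fourierTransform (⇑u) ξ) =
      -(∫ ξ, Complex.exp (Complex.I * ((inner ℝ x ξ : ℝ) : ℂ)) * Stmt7Aux.sigmaD q t ξ *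
        fourierTransform (⇑u) ξ) := by
    rw [← integral_neg]
    exact integral_congr_ae (Eventually.of_forall (fun ξ => hpt ξ))
  have hfinal : -((((2 * π) ^ (-(n:ℝ)/2) : ℝ) : ℂ) *
      ∫ ξ, Complex.exp (Complex.I * ((inner ℝ x ξ : ℝ) : ℂ)) * Asymb q t ξ *
        sigmaFn q t ξ * fourierTransform (⇑u) ξ) =
      (((2 * π) ^ (-(n:ℝ)/2) : ℝ) : ℂ) *
        ∫ ξ, Complex.exp (Complex.I * ((inner ℝ x ξ : ℝ) : ℂ)) * Stmt7Aux.sigmaD q t ξ *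
          fourierTransform (⇑u) ξ := by
    rw [hint_eq]; ring
  exact ⟨fun ξ => (hσ t ht ξ).differentiableAt, hS.differentiableAt, hfinal ▸ hS⟩
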